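/- arXiv:1311.6367 — 2 statements merged into one kernel-verified Lean document; each statement's English description precedes it below -/
import Mathlib

section
/- Let (P_μ)_{μ∈𝒫(E)} be a nonlinear Markov transition kernel family on a measurable space (E,ℰ) satisfying the global nonlinear Dobrushin condition with constant α ∈ (0,1]. For μ, ν ∈ 𝒫(E) with μ ≠ ν, let η(dx) = (dμ/dν ∧ 1) ν(dx), where dμ/dν is the Radon–Nikodym derivative of the absolutely continuous part of μ with respect to ν. Then d_TV(P_μ(μ − η), P_ν(ν − η)) ≤ (1 − α) d_TV(μ,ν), where P_μ(μ − η) denotes the (nonnegative) measure B ↦ ∫_E P_μ(x,B)(μ − η)(dx). -/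
open MeasureTheory ProbabilityTheory

/-- Total variation distance between finite measures (for measures of equal total mass this
is the total variation norm of the difference):
`d_TV(ρ₁,ρ₂) = 2 ⨆_{A measurable} |ρ₁(A) − ρ₂(A)|`. -/
noncomputable def dTV {E : Type*} [MeasurableSpace E] (μ ν : Measure E) : ℝ :=
  2 * ⨆ A : {A : Set E // MeasurableSet A}, |(μ A.1).toReal - (ν A.1).toReal|

lemma dTV_bdd {E : Type*} [MeasurableSpace E] (μ ν : Measure E) [IsFiniteMeasure μ]
    [IsFiniteMeasure ν] :
    BddAbove (Set.range fun A : {A : Set E // MeasurableSet A} =>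
      |(μ A.1).toReal - (ν A.1).toReal|) := by
  refine ⟨(μ Set.univ).toReal + (ν Set.univ).toReal, ?_⟩
  rintro x ⟨A, rfl⟩
  have h1 : (μ A.1).toReal ≤ (μ Set.univ).toReal :=
    ENNReal.toReal_mono (measure_ne_top _ _) (measure_mono (Set.subset_univ _))
  have h2 : (ν A.1).toReal ≤ (ν Set.univ).toReal :=
    ENNReal.toReal_mono (measure_ne_top _ _) (measure_mono (Set.subset_univ _))
  have h3 : (0:ℝ) ≤ (μ A.1).toReal := ENNReal.toReal_nonneg
  have h4 : (0:ℝ) ≤ (ν A.1).toReal := ENNReal.toReal_nonneg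
  rw [abs_le]; constructor <;> linarith

lemma abs_le_dTV_div_two {E : Type*} [MeasurableSpace E] (μ ν : Measure E) [IsFiniteMeasure μ]
    [IsFiniteMeasure ν] {A : Set E} (hA : MeasurableSet A) :
    |(μ A).toReal - (ν A).toReal| ≤ dTV μ ν / 2 := by
  have := le_ciSup (dTV_bdd μ ν) (⟨A, hA⟩ : {A : Set E // MeasurableSet A})
  rw [dTV]; simp only at this ⊢; linarith

lemma dTV_le_of_forall {E : Type*} [MeasurableSpace E] (μ ν : Measure E) {c : ℝ}
    (h : ∀ A : Set E, MeasurableSet A → |(μ A).toReal - (ν A).toReal| ≤ c) :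
    dTV μ ν ≤ 2 * c := by
  have hne : Nonempty {A : Set E // MeasurableSet A} := ⟨⟨∅, MeasurableSet.empty⟩⟩
  have := ciSup_le (fun A : {A : Set E // MeasurableSet A} => h A.1 A.2)
  rw [dTV]; linarith

lemma dTV_nonneg {E : Type*} [MeasurableSpace E] (μ ν : Measure E) [IsFiniteMeasure μ]
    [IsFiniteMeasure ν] : 0 ≤ dTV μ ν := by
  have h := le_ciSup (dTV_bdd μ ν) (⟨∅, MeasurableSet.empty⟩ : {A : Set E // MeasurableSet A})
  have : (0:ℝ) ≤ |(μ (∅ : Set E)).toReal - (ν (∅ : Set E)).toReal| := abs_nonneg _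
  rw [dTV]; linarith

/-- The coupling estimate: if the two kernels are pointwise at total-variation distance at most
`2(1-α)` and the two (sub-probability) measures have the same total mass `m > 0`, then the images
differ by at most `(1-α)m` on every measurable set. -/
lemma couple_bound {E : Type*} [MeasurableSpace E] (κ₁ κ₂ : Kernel E E)
    [IsMarkovKernel κ₁] [IsMarkovKernel κ₂]
    (ρ₁ ρ₂ : Measure E) [IsFiniteMeasure ρ₁] [IsFiniteMeasure ρ₂]
    (α : ℝ)
    (hkey : ∀ (x y : E) (A : Set E), MeasurableSet A →
      |(κ₁ x A).toReal - (κ₂ y A).toReal| ≤ 1 - α)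
    (m : ℝ) (hm1 : (ρ₁ Set.univ).toReal = m) (hm2 : (ρ₂ Set.univ).toReal = m)
    (hmpos : 0 < m)
    (A : Set E) (hA : MeasurableSet A) :
    |((ρ₁.bind ⇑κ₁) A).toReal - ((ρ₂.bind ⇑κ₂) A).toReal| ≤ (1 - α) * m := by
  set g : E → ℝ := fun x => (κ₁ x A).toReal with hg
  set h : E → ℝ := fun y => (κ₂ y A).toReal with hh
  have hgmeas : Measurable g := (Kernel.measurable_coe _ hA).ennreal_toReal
  have hhmeas : Measurable h := (Kernel.measurable_coe _ hA).ennreal_toReal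
  have hgbd : ∀ x, ‖g x‖ ≤ 1 := fun x => by
    rw [Real.norm_eq_abs, abs_of_nonneg ENNReal.toReal_nonneg]
    simpa using ENNReal.toReal_mono ENNReal.one_ne_top (prob_le_one (μ := κ₁ x) (s := A))
  have hhbd : ∀ y, ‖h y‖ ≤ 1 := fun y => by
    rw [Real.norm_eq_abs, abs_of_nonneg ENNReal.toReal_nonneg]
    simpa using ENNReal.toReal_mono ENNReal.one_ne_top (prob_le_one (μ := κ₂ y) (s := A))
  have hgint : Integrable g ρ₁ :=
    (integrable_const (1:ℝ)).mono' hgmeas.aestronglyMeasurable (ae_of_all _ hgbd)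
  have hhint : Integrable h ρ₂ :=
    (integrable_const (1:ℝ)).mono' hhmeas.aestronglyMeasurable (ae_of_all _ hhbd)
  have e1 : ((ρ₁.bind ⇑κ₁) A).toReal = ∫ x, g x ∂ρ₁ := by
    rw [Measure.bind_apply hA κ₁.measurable.aemeasurable]
    rw [← integral_toReal (κ₁.measurable_coe hA).aemeasurable
      (ae_of_all _ fun x => lt_of_le_of_lt prob_le_one ENNReal.one_lt_top)]
  have e2 : ((ρ₂.bind ⇑κ₂) A).toReal = ∫ y, h y ∂ρ₂ := by
    rw [Measure.bind_apply hA κ₂.measurable.aemeasurable]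
    rw [← integral_toReal (κ₂.measurable_coe hA).aemeasurable
      (ae_of_all _ fun x => lt_of_le_of_lt prob_le_one ENNReal.one_lt_top)]
  rw [e1, e2]
  set Ig : ℝ := ∫ x, g x ∂ρ₁ with hIg
  set Ih : ℝ := ∫ y, h y ∂ρ₂ with hIh
  have hrep : ∀ y, ∫ x, (g x - h y) ∂ρ₁ = Ig - m * h y := by
    intro y
    rw [integral_sub hgint (integrable_const _), integral_const, measureReal_def, hm1, smul_eq_mul]
  have hinner : ∀ y, |Ig - m * h y| ≤ (1 - α) * m := by
    intro y
    rw [← hrep y]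
    calc |∫ x, (g x - h y) ∂ρ₁| ≤ ∫ x, |g x - h y| ∂ρ₁ := by
          simpa [Real.norm_eq_abs] using
            norm_integral_le_integral_norm (fun x => g x - h y) (μ := ρ₁)
      _ ≤ ∫ _x, (1 - α) ∂ρ₁ := by
          refine integral_mono ((hgint.sub (integrable_const _)).abs) (integrable_const _) ?_
          intro x; exact hkey x y A hA
      _ = (1 - α) * m := by rw [integral_const, measureReal_def, hm1, smul_eq_mul, mul_comm]
  have hFint : Integrable (fun y => Ig - m * h y) ρ₂ :=
    (integrable_const _).sub (hhint.const_mul m)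
  have houter_eq : ∫ y, (Ig - m * h y) ∂ρ₂ = m * (Ig - Ih) := by
    rw [integral_sub (integrable_const _) (hhint.const_mul m), integral_const, measureReal_def, hm2,
      integral_const_mul, smul_eq_mul]
    ring
  have houter_le : |∫ y, (Ig - m * h y) ∂ρ₂| ≤ (1 - α) * m * m := by
    calc |∫ y, (Ig - m * h y) ∂ρ₂| ≤ ∫ y, |Ig - m * h y| ∂ρ₂ := by
          simpa [Real.norm_eq_abs] using
            norm_integral_le_integral_norm (fun y => Ig - m * h y) (μ := ρ₂)
      _ ≤ ∫ _y, (1 - α) * m ∂ρ₂ := integral_mono hFint.abs (integrable_const _)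
            (fun y => hinner y)
      _ = (1 - α) * m * m := by rw [integral_const, measureReal_def, hm2, smul_eq_mul, mul_comm]
  rw [houter_eq, abs_mul, abs_of_pos hmpos] at houter_le
  have := (mul_le_mul_iff_right₀ hmpos).mp (by linarith [houter_le] : m * |Ig - Ih| ≤ m * ((1 - α) * m))
  linarith

/-- With `η(dx) = (dμ/dν ∧ 1) ν(dx)` and `μ ≠ ν`, under the global nonlinear Dobrushin
condition with constant `α ∈ (0,1]` one has
`d_TV(P_μ (μ−η), P_ν (ν−η)) ≤ (1 − α) d_TV(μ,ν)`. -/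
theorem stmt5 {E : Type*} [MeasurableSpace E]
    (P : Measure E → Kernel E E) (hMarkov : ∀ μ, IsMarkovKernel (P μ))
    (α : ℝ) (hα0 : 0 < α) (hα1 : α ≤ 1)
    (hDobr : ∀ μ ν : Measure E, IsProbabilityMeasure μ → IsProbabilityMeasure ν →
      ∀ x y : E, dTV ((P μ) x) ((P ν) y) ≤ 2 * (1 - α))
    (μ ν : Measure E) (hμ : IsProbabilityMeasure μ) (hν : IsProbabilityMeasure ν)
    (hne : μ ≠ ν)
    (η : Measure E) (hη : η = ν.withDensity (fun x => min (μ.rnDeriv ν x) 1)) :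
    dTV ((μ - η).bind ⇑(P μ)) ((ν - η).bind ⇑(P ν)) ≤ (1 - α) * dTV μ ν := by
  classical
  haveI := hMarkov μ; haveI := hMarkov ν
  set f := μ.rnDeriv ν with hfdef
  have hf : Measurable f := Measure.measurable_rnDeriv μ ν
  have hLeb : μ = μ.singularPart ν + ν.withDensity f := μ.haveLebesgueDecomposition_add ν
  -- η ≤ μ and η ≤ ν
  have hημ : η ≤ μ := by
    rw [Measure.le_iff]; intro A hA
    rw [hη, withDensity_apply _ hA]
    calc ∫⁻ x in A, min (f x) 1 ∂ν ≤ ∫⁻ x in A, f x ∂ν :=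
          lintegral_mono fun x => min_le_left _ _
      _ = ν.withDensity f A := (withDensity_apply _ hA).symm
      _ ≤ μ A := by
          conv_rhs => rw [hLeb]
          rw [Measure.add_apply]; exact le_add_self
  have hην : η ≤ ν := by
    rw [Measure.le_iff]; intro A hA
    rw [hη, withDensity_apply _ hA]
    calc ∫⁻ x in A, min (f x) 1 ∂ν ≤ ∫⁻ x in A, 1 ∂ν :=
          lintegral_mono fun x => min_le_right _ _
      _ = ν A := by rw [setLIntegral_one]
  haveI : IsFiniteMeasure η := isFiniteMeasure_of_le ν hην
  haveI : IsFiniteMeasure (μ - η) := isFiniteMeasure_of_le μ Measure.sub_le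
  haveI : IsFiniteMeasure (ν - η) := isFiniteMeasure_of_le ν Measure.sub_le
  have hmass1 : (μ - η) Set.univ = 1 - η Set.univ := by
    rw [Measure.sub_apply MeasurableSet.univ hημ, measure_univ]
  have hmass2 : (ν - η) Set.univ = 1 - η Set.univ := by
    rw [Measure.sub_apply MeasurableSet.univ hην, measure_univ]
  set m : ℝ := ((μ - η) Set.univ).toReal with hmdef
  have hm2 : ((ν - η) Set.univ).toReal = m := by rw [hmass2, ← hmass1]
  have hmnonneg : 0 ≤ m := ENNReal.toReal_nonneg
  -- pointwise kernel bound
  have hkey : ∀ (x y : E) (A : Set E), MeasurableSet A →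
      |((P μ) x A).toReal - ((P ν) y A).toReal| ≤ 1 - α := by
    intro x y A hA
    have h1 := abs_le_dTV_div_two ((P μ) x) ((P ν) y) hA
    have h2 := hDobr μ ν hμ hν x y
    linarith
  rcases eq_or_lt_of_le hmnonneg with hm0 | hmpos
  · -- m = 0 : both measures vanish
    have hm0' : ((μ - η) Set.univ).toReal = 0 := hm0.symm
    have huniv0 : (μ - η) Set.univ = 0 :=
      ((ENNReal.toReal_eq_zero_iff _).mp hm0').resolve_right (measure_ne_top _ _)
    have hz1 : (μ - η) = 0 := Measure.measure_univ_eq_zero.mp huniv0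
    have hz2 : (ν - η) = 0 := by
      refine Measure.measure_univ_eq_zero.mp ?_
      rw [hmass2, ← hmass1]
      exact huniv0
    rw [hz1, hz2, Measure.bind_zero_left, Measure.bind_zero_left]
    have h0 : dTV (0 : Measure E) (0 : Measure E) ≤ 2 * 0 :=
      dTV_le_of_forall _ _ (fun A hA => by simp)
    have := dTV_nonneg μ ν
    nlinarith
  · -- main case
    have hmain : ∀ A : Set E, MeasurableSet A →
        |(((μ - η).bind ⇑(P μ)) A).toReal - (((ν - η).bind ⇑(P ν)) A).toReal| ≤ (1 - α) * m :=
      fun A hA => couple_bound (P μ) (P ν) (μ - η) (ν - η) α hkey m rfl hm2 hmpos A hA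
    refine le_trans (dTV_le_of_forall _ _ hmain) ?_
    -- it remains to show 2 * ((1-α)*m) ≤ (1-α) * dTV μ ν, i.e. m ≤ dTV μ ν / 2
    have hmle : m ≤ dTV μ ν / 2 := by
      obtain ⟨s, hs, hξs, hνsc⟩ := Measure.mutuallySingular_singularPart μ ν
      set ξ := μ.singularPart ν with hξdef
      set T : Set E := {x | 1 ≤ f x} with hTdef
      have hT : MeasurableSet T := measurableSet_le measurable_const hf
      set B := T ∪ sᶜ with hBdef
      have hB : MeasurableSet B := hT.union hs.compl
      have hξB : ξ B = ξ Set.univ := by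
        have h1 : ξ Bᶜ = 0 := by
          refine measure_mono_null ?_ hξs
          intro x hx
          rw [hBdef, Set.compl_union] at hx
          exact not_not.mp hx.2
        rw [← measure_add_measure_compl hB, h1, add_zero]
      have hνB : ν B = ν T := by
        refine le_antisymm ?_ (measure_mono Set.subset_union_left)
        calc ν B ≤ ν T + ν sᶜ := measure_union_le _ _
          _ = ν T := by rw [hνsc, add_zero]
      have hBT : B =ᵐ[ν] T := by
        rw [MeasureTheory.ae_eq_set]
        constructor
        · refine measure_mono_null ?_ hνsc
          intro x hx
          rcases hx.1 with h | h
          · exact absurd h hx.2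
          · exact h
        · rw [Set.diff_eq_empty.mpr Set.subset_union_left, measure_empty]
      have hμB : μ B = ξ Set.univ + ∫⁻ x in T, f x ∂ν := by
        conv_lhs => rw [hLeb]
        rw [Measure.add_apply, hξB, withDensity_apply _ hB, setLIntegral_congr hBT]
      have hμuniv : μ Set.univ = ξ Set.univ + (∫⁻ x in T, f x ∂ν + ∫⁻ x in Tᶜ, f x ∂ν) := by
        conv_lhs => rw [hLeb]
        rw [Measure.add_apply, withDensity_apply _ MeasurableSet.univ, Measure.restrict_univ,
          ← lintegral_add_compl _ hT]
      have hηuniv : η Set.univ = ν T + ∫⁻ x in Tᶜ, f x ∂ν := by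
        rw [hη, withDensity_apply _ MeasurableSet.univ, Measure.restrict_univ,
          ← lintegral_add_compl _ hT]
        congr 1
        · have e1 : ∫⁻ x in T, min (f x) 1 ∂ν = ∫⁻ x in T, (1:ENNReal) ∂ν :=
            setLIntegral_congr_fun hT (fun x hx => by
              have hx1 : (1:ENNReal) ≤ f x := hx
              simp [min_eq_right hx1])
          rw [e1, setLIntegral_one]
        · refine setLIntegral_congr_fun hT.compl (fun x hx => ?_)
          have hx' : f x < 1 := lt_of_not_ge (by exact hx)
          simp [min_eq_left hx'.le]
      have hid : μ B + η Set.univ = μ Set.univ + ν B := by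
        rw [hμB, hμuniv, hηuniv, hνB]; ring
      have hidR : (μ B).toReal + (η Set.univ).toReal
          = (μ Set.univ).toReal + (ν B).toReal := by
        rw [← ENNReal.toReal_add (measure_ne_top _ _) (measure_ne_top _ _),
          ← ENNReal.toReal_add (measure_ne_top _ _) (measure_ne_top _ _), hid]
      have hmval : m = (μ Set.univ).toReal - (η Set.univ).toReal := by
        rw [hmdef, Measure.sub_apply MeasurableSet.univ hημ,
          ENNReal.toReal_sub_of_le (Measure.le_iff'.1 hημ Set.univ) (measure_ne_top _ _)]
      have hdB := abs_le_dTV_div_two μ ν hB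
      have : m ≤ |(μ B).toReal - (ν B).toReal| := by
        rw [hmval]
        have : (μ B).toReal - (ν B).toReal = (μ Set.univ).toReal - (η Set.univ).toReal := by
          linarith
        rw [← this]
        exact le_abs_self _
      linarith
    nlinarith [dTV_nonneg μ ν]
end

section
/- Let (P_μ)_{μ∈𝒫(E)} be a nonlinear Markov transition kernel family on a measurable space (E,ℰ) satisfying the global nonlinear Dobrushin condition with constant α ∈ (0,1] and the measure-Lipschitz condition with constant λ, where 0 ≤ λ < α. Then for all μ, ν ∈ 𝒫(E) and all n ∈ ℤ₊, the n-th marginal laws satisfy d_TV(μ_n, ν_n) ≤ 2(1 − α + λ)^n, where μ_0 = μ, ν_0 = ν, μ_{k+1} = P_{μ_k} μ_k and ν_{k+1} = P_{ν_k} ν_k. -/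
open MeasureTheory ProbabilityTheory
open scoped ENNReal

section auxiliary
variable {E : Type*} [MeasurableSpace E]

instance : Nonempty {A : Set E // MeasurableSet A} := ⟨⟨∅, MeasurableSet.empty⟩⟩

lemma toReal_prob_le_one (μ : Measure E) [IsProbabilityMeasure μ] (A : Set E) :
    (μ A).toReal ≤ 1 := by
  have h := prob_le_one (μ := μ) (s := A)
  calc (μ A).toReal ≤ ((1 : ℝ≥0∞)).toReal := ENNReal.toReal_mono (by simp) h
    _ = 1 := ENNReal.toReal_one

lemma dTV_le {μ ν : Measure E} {c : ℝ}
    (h : ∀ A : Set E, MeasurableSet A → |(μ A).toReal - (ν A).toReal| ≤ c) :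
    dTV μ ν ≤ 2 * c := by
  unfold dTV
  have : (⨆ A : {A : Set E // MeasurableSet A}, |(μ A.1).toReal - (ν A.1).toReal|) ≤ c :=
    ciSup_le fun A => h A.1 A.2
  linarith

lemma abs_le_half_dTV {μ ν : Measure E} [IsProbabilityMeasure μ] [IsProbabilityMeasure ν]
    {A : Set E} (hA : MeasurableSet A) :
    |(μ A).toReal - (ν A).toReal| ≤ dTV μ ν / 2 := by
  have hb : BddAbove (Set.range fun A : {A : Set E // MeasurableSet A} =>
      |(μ A.1).toReal - (ν A.1).toReal|) := by
    refine ⟨1, ?_⟩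
    rintro x ⟨B, rfl⟩
    have h1 : (μ B.1).toReal ≤ 1 := toReal_prob_le_one μ B.1
    have h2 : (ν B.1).toReal ≤ 1 := toReal_prob_le_one ν B.1
    have h3 : 0 ≤ (μ B.1).toReal := ENNReal.toReal_nonneg
    have h4 : 0 ≤ (ν B.1).toReal := ENNReal.toReal_nonneg
    rw [abs_le]; constructor <;> linarith
  have := le_ciSup hb (⟨A, hA⟩ : {A : Set E // MeasurableSet A})
  unfold dTV
  linarith

lemma int_of_bdd {h : E → ℝ} (hm : Measurable h) (h0 : ∀ x, 0 ≤ h x) (h1 : ∀ x, h x ≤ 1)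
    (ρ : Measure E) [IsFiniteMeasure ρ] : Integrable h ρ :=
  (integrable_const (1 : ℝ)).mono' hm.aestronglyMeasurable
    (Filter.Eventually.of_forall fun x => by
      rw [Real.norm_eq_abs, abs_of_nonneg (h0 x)]; exact h1 x)

lemma core {μ ν : Measure E} [IsProbabilityMeasure μ] [IsProbabilityMeasure ν]
    {f g : E → ℝ} (hf : Measurable f) (hg : Measurable g)
    (hf0 : ∀ x, 0 ≤ f x) (hf1 : ∀ x, f x ≤ 1) (hg0 : ∀ x, 0 ≤ g x) (hg1 : ∀ x, g x ≤ 1)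
    {c₁ c₂ t : ℝ} (hc₂ : 0 ≤ c₂)
    (h1 : ∀ x, f x - g x ≤ c₁) (h2 : ∀ x y, g x - g y ≤ c₂)
    (ht : ∀ A : Set E, MeasurableSet A → (μ A).toReal - (ν A).toReal ≤ t) :
    ∫ x, f x ∂μ - ∫ x, g x ∂ν ≤ c₁ + c₂ * t := by
  obtain ⟨S, hSm, hpos, hneg⟩ :=
    (μ.toSignedMeasure - ν.toSignedMeasure).exists_compl_positive_negative
  have hposS : ∀ A : Set E, MeasurableSet A → A ⊆ S → ν A ≤ μ A := by
    intro A hA hAS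
    have := (VectorMeasure.restrict_le_restrict_iff _ _ hSm).1 hpos hA hAS
    rw [VectorMeasure.zero_apply, Measure.toSignedMeasure_sub_apply hA, measureReal_def,
      measureReal_def] at this
    exact (ENNReal.toReal_le_toReal (measure_ne_top _ _) (measure_ne_top _ _)).1 (by linarith)
  have hnegS : ∀ A : Set E, MeasurableSet A → A ⊆ Sᶜ → μ A ≤ ν A := by
    intro A hA hAS
    have := (VectorMeasure.restrict_le_restrict_iff _ _ hSm.compl).1 hneg hA hAS
    rw [VectorMeasure.zero_apply, Measure.toSignedMeasure_sub_apply hA, measureReal_def,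
      measureReal_def] at this
    exact (ENNReal.toReal_le_toReal (measure_ne_top _ _) (measure_ne_top _ _)).1 (by linarith)
  have hle₁ : ν.restrict S ≤ μ.restrict S := by
    refine Measure.le_iff.2 fun A hA => ?_
    rw [Measure.restrict_apply hA, Measure.restrict_apply hA]
    exact hposS _ (hA.inter hSm) Set.inter_subset_right
  have hle₂ : μ.restrict Sᶜ ≤ ν.restrict Sᶜ := by
    refine Measure.le_iff.2 fun A hA => ?_
    rw [Measure.restrict_apply hA, Measure.restrict_apply hA]
    exact hnegS _ (hA.inter hSm.compl) Set.inter_subset_right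
  set ρ₁ : Measure E := μ.restrict S - ν.restrict S with hρ₁
  set ρ₂ : Measure E := ν.restrict Sᶜ - μ.restrict Sᶜ with hρ₂
  have hm₁ : (ρ₁ Set.univ).toReal = (μ S).toReal - (ν S).toReal := by
    rw [hρ₁, Measure.sub_apply MeasurableSet.univ hle₁, Measure.restrict_apply_univ,
      Measure.restrict_apply_univ,
      ENNReal.toReal_sub_of_le (hposS S hSm subset_rfl) (measure_ne_top _ _)]
  have hm₂ : (ρ₂ Set.univ).toReal = (ν Sᶜ).toReal - (μ Sᶜ).toReal := by
    rw [hρ₂, Measure.sub_apply MeasurableSet.univ hle₂, Measure.restrict_apply_univ,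
      Measure.restrict_apply_univ,
      ENNReal.toReal_sub_of_le (hnegS Sᶜ hSm.compl subset_rfl) (measure_ne_top _ _)]
  have hsum : ∀ (κ : Measure E), IsProbabilityMeasure κ →
      (κ S).toReal + (κ Sᶜ).toReal = 1 := by
    intro κ hκ
    rw [← ENNReal.toReal_add (measure_ne_top _ _) (measure_ne_top _ _),
      measure_add_measure_compl hSm, measure_univ, ENNReal.toReal_one]
  have hmass : (ρ₂ Set.univ).toReal = (ρ₁ Set.univ).toReal := by
    have := hsum μ ‹_›; have := hsum ν ‹_›
    rw [hm₁, hm₂]; linarith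
  set m := (ρ₁ Set.univ).toReal with hmdef
  have hm0 : 0 ≤ m := ENNReal.toReal_nonneg
  have hmt : m ≤ t := by rw [hm₁]; exact ht S hSm
  have hdesc₁ : ∫ x, g x ∂μ
      = ∫ x, g x ∂ρ₁ + ∫ x, g x ∂(ν.restrict S) + ∫ x, g x ∂(μ.restrict Sᶜ) := by
    rw [← integral_add_compl hSm (int_of_bdd hg hg0 hg1 μ)]
    have : μ.restrict S = ρ₁ + ν.restrict S := (Measure.sub_add_cancel_of_le hle₁).symm
    rw [show (∫ x in S, g x ∂μ) = ∫ x, g x ∂(μ.restrict S) from rfl, this,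
      integral_add_measure (int_of_bdd hg hg0 hg1 _) (int_of_bdd hg hg0 hg1 _)]
  have hdesc₂ : ∫ x, g x ∂ν
      = ∫ x, g x ∂ρ₂ + ∫ x, g x ∂(ν.restrict S) + ∫ x, g x ∂(μ.restrict Sᶜ) := by
    rw [← integral_add_compl hSm (int_of_bdd hg hg0 hg1 ν)]
    have : ν.restrict Sᶜ = ρ₂ + μ.restrict Sᶜ := (Measure.sub_add_cancel_of_le hle₂).symm
    rw [show (∫ x in Sᶜ, g x ∂ν) = ∫ x, g x ∂(ν.restrict Sᶜ) from rfl, this,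
      integral_add_measure (int_of_bdd hg hg0 hg1 _) (int_of_bdd hg hg0 hg1 _)]
    ring
  have hkey : ∫ x, g x ∂ρ₁ - ∫ x, g x ∂ρ₂ ≤ c₂ * m := by
    rcases eq_or_lt_of_le hm0 with hm | hm
    · have hub : ∫ x, g x ∂ρ₁ ≤ ∫ _x, (1 : ℝ) ∂ρ₁ :=
        integral_mono (int_of_bdd hg hg0 hg1 _) (integrable_const _) hg1
      rw [integral_const, smul_eq_mul, mul_one, measureReal_def] at hub
      have hlb : 0 ≤ ∫ x, g x ∂ρ₂ := integral_nonneg hg0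
      nlinarith
    · have step : ∀ y, ∫ x, g x ∂ρ₁ ≤ (g y + c₂) * m := by
        intro y
        have : ∫ x, g x ∂ρ₁ ≤ ∫ _x, (g y + c₂) ∂ρ₁ :=
          integral_mono (int_of_bdd hg hg0 hg1 _) (integrable_const _)
            (fun x => by linarith [h2 x y])
        rw [integral_const, smul_eq_mul, measureReal_def] at this
        linarith [this]
      have step2 : ∫ _y, (∫ x, g x ∂ρ₁) ∂ρ₂ ≤ ∫ y, (g y + c₂) * m ∂ρ₂ :=
        integral_mono (integrable_const _)
          (((int_of_bdd hg hg0 hg1 ρ₂).add (integrable_const _)).mul_const _)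
          (fun y => step y)
      rw [integral_const, smul_eq_mul, measureReal_def, hmass, integral_mul_const,
        integral_add (int_of_bdd hg hg0 hg1 ρ₂) (integrable_const _), integral_const,
        smul_eq_mul, measureReal_def, hmass] at step2
      nlinarith
  have hfg : ∫ x, f x ∂μ ≤ ∫ x, g x ∂μ + c₁ := by
    have : ∫ x, f x ∂μ ≤ ∫ x, (g x + c₁) ∂μ :=
      integral_mono (int_of_bdd hf hf0 hf1 _)
        ((int_of_bdd hg hg0 hg1 _).add (integrable_const _)) (fun x => by linarith [h1 x])
    rwa [integral_add (int_of_bdd hg hg0 hg1 _) (integrable_const _), integral_const,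
      measureReal_def, measure_univ, ENNReal.toReal_one, one_smul] at this
  have : c₂ * m ≤ c₂ * t := mul_le_mul_of_nonneg_left hmt hc₂
  linarith

lemma bind_prob {μ : Measure E} (hμ : IsProbabilityMeasure μ) (κ : Kernel E E)
    [IsMarkovKernel κ] : IsProbabilityMeasure (μ.bind ⇑κ) := by
  constructor
  rw [Measure.bind_apply MeasurableSet.univ κ.measurable.aemeasurable]
  simp [measure_univ]

lemma bind_toReal {μ : Measure E} [IsProbabilityMeasure μ] (κ : Kernel E E)
    [IsMarkovKernel κ] {A : Set E} (hA : MeasurableSet A) :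
    ((μ.bind ⇑κ) A).toReal = ∫ x, ((κ x) A).toReal ∂μ := by
  rw [Measure.bind_apply hA κ.measurable.aemeasurable,
    ← integral_toReal (κ.measurable_coe hA).aemeasurable
      (Filter.Eventually.of_forall fun x => measure_lt_top _ _)]

end auxiliary

/-- Under the global nonlinear Dobrushin condition with constant `α ∈ (0,1]` and the
measure-Lipschitz condition with constant `lam`, `0 ≤ lam < α`, the marginal laws started
from any two initial distributions satisfy `d_TV(μ_n, ν_n) ≤ 2 (1 − α + lam)^n`. -/
theorem stmt6 {E : Type*} [MeasurableSpace E]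
    (P : Measure E → Kernel E E) (hMarkov : ∀ μ, IsMarkovKernel (P μ))
    (α lam : ℝ) (hα0 : 0 < α) (hα1 : α ≤ 1) (hlam0 : 0 ≤ lam) (hlamα : lam < α)
    (hDobr : ∀ μ ν : Measure E, IsProbabilityMeasure μ → IsProbabilityMeasure ν →
      ∀ x y : E, dTV ((P μ) x) ((P ν) y) ≤ 2 * (1 - α))
    (hLip : ∀ μ ν : Measure E, IsProbabilityMeasure μ → IsProbabilityMeasure ν →
      ∀ x : E, dTV ((P μ) x) ((P ν) x) ≤ lam * dTV μ ν)
    (μ ν : Measure E) (hμ : IsProbabilityMeasure μ) (hν : IsProbabilityMeasure ν)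
    (μseq νseq : ℕ → Measure E) (hμ0 : μseq 0 = μ) (hν0 : νseq 0 = ν)
    (hμS : ∀ k : ℕ, μseq (k + 1) = (μseq k).bind ⇑(P (μseq k)))
    (hνS : ∀ k : ℕ, νseq (k + 1) = (νseq k).bind ⇑(P (νseq k))) :
    ∀ n : ℕ, dTV (μseq n) (νseq n) ≤ 2 * (1 - α + lam) ^ n := by
  have hr0 : (0 : ℝ) ≤ 1 - α + lam := by linarith
  have hprob : ∀ n, IsProbabilityMeasure (μseq n) ∧ IsProbabilityMeasure (νseq n) := by
    intro n
    induction n with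
    | zero => rw [hμ0, hν0]; exact ⟨hμ, hν⟩
    | succ k ih =>
      haveI := hMarkov (μseq k); haveI := hMarkov (νseq k)
      rw [hμS k, hνS k]
      exact ⟨bind_prob ih.1 _, bind_prob ih.2 _⟩
  intro n
  induction n with
  | zero =>
    rw [hμ0, hν0, pow_zero]
    haveI := hμ; haveI := hν
    refine dTV_le fun A hA => ?_
    have h1 : (μ A).toReal ≤ 1 := toReal_prob_le_one μ A
    have h2 : (ν A).toReal ≤ 1 := toReal_prob_le_one ν A
    have h3 : 0 ≤ (μ A).toReal := ENNReal.toReal_nonneg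
    have h4 : 0 ≤ (ν A).toReal := ENNReal.toReal_nonneg
    rw [abs_le]; constructor <;> linarith
  | succ n ih =>
    haveI hPμ := (hprob n).1
    haveI hPν := (hprob n).2
    haveI := hMarkov (μseq n); haveI := hMarkov (νseq n)
    set d := dTV (μseq n) (νseq n) with hddef
    rw [hμS n, hνS n]
    have hbound : dTV ((μseq n).bind ⇑(P (μseq n))) ((νseq n).bind ⇑(P (νseq n)))
        ≤ 2 * ((lam + (1 - α)) * (d / 2)) := by
      refine dTV_le fun A hA => ?_
      rw [bind_toReal _ hA, bind_toReal _ hA]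
      have hmf : Measurable fun x => (((P (μseq n)) x) A).toReal :=
        ((P (μseq n)).measurable_coe hA).ennreal_toReal
      have hmg : Measurable fun x => (((P (νseq n)) x) A).toReal :=
        ((P (νseq n)).measurable_coe hA).ennreal_toReal
      have hα' : (0 : ℝ) ≤ 1 - α := by linarith
      have hLxy : ∀ x, |(((P (μseq n)) x) A).toReal - (((P (νseq n)) x) A).toReal|
          ≤ lam * (d / 2) := by
        intro x
        haveI : IsProbabilityMeasure ((P (μseq n)) x) := IsMarkovKernel.isProbabilityMeasure x
        haveI : IsProbabilityMeasure ((P (νseq n)) x) := IsMarkovKernel.isProbabilityMeasure x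
        have := abs_le_half_dTV (μ := (P (μseq n)) x) (ν := (P (νseq n)) x) hA
        have hL := hLip (μseq n) (νseq n) hPμ hPν x
        rw [← hddef] at hL
        linarith
      have hDν : ∀ x y, (((P (νseq n)) x) A).toReal - (((P (νseq n)) y) A).toReal
          ≤ 1 - α := by
        intro x y
        haveI : IsProbabilityMeasure ((P (νseq n)) x) := IsMarkovKernel.isProbabilityMeasure x
        haveI : IsProbabilityMeasure ((P (νseq n)) y) := IsMarkovKernel.isProbabilityMeasure y
        have := abs_le_half_dTV (μ := (P (νseq n)) x) (ν := (P (νseq n)) y) hA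
        have hD := hDobr (νseq n) (νseq n) hPν hPν x y
        rw [abs_le] at this
        linarith
      have hDμ : ∀ x y, (((P (μseq n)) x) A).toReal - (((P (μseq n)) y) A).toReal
          ≤ 1 - α := by
        intro x y
        haveI : IsProbabilityMeasure ((P (μseq n)) x) := IsMarkovKernel.isProbabilityMeasure x
        haveI : IsProbabilityMeasure ((P (μseq n)) y) := IsMarkovKernel.isProbabilityMeasure y
        have := abs_le_half_dTV (μ := (P (μseq n)) x) (ν := (P (μseq n)) y) hA
        have hD := hDobr (μseq n) (μseq n) hPμ hPμ x y
        rw [abs_le] at this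
        linarith
      have ht : ∀ B : Set E, MeasurableSet B →
          (μseq n B).toReal - (νseq n B).toReal ≤ d / 2 := by
        intro B hB
        have := abs_le_half_dTV (μ := μseq n) (ν := νseq n) hB
        rw [← hddef] at this
        rw [abs_le] at this
        linarith
      have ht' : ∀ B : Set E, MeasurableSet B →
          (νseq n B).toReal - (μseq n B).toReal ≤ d / 2 := by
        intro B hB
        have := abs_le_half_dTV (μ := μseq n) (ν := νseq n) hB
        rw [← hddef] at this
        rw [abs_le] at this
        linarith
      have hup : ∫ x, (((P (μseq n)) x) A).toReal ∂(μseq n)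
          - ∫ x, (((P (νseq n)) x) A).toReal ∂(νseq n)
          ≤ lam * (d / 2) + (1 - α) * (d / 2) := by
        refine core hmf hmg (fun x => ENNReal.toReal_nonneg)
          (fun x => ?_) (fun x => ENNReal.toReal_nonneg) (fun x => ?_) hα'
          (fun x => by have := hLxy x; rw [abs_le] at this; linarith)
          hDν ht
        · haveI : IsProbabilityMeasure ((P (μseq n)) x) := IsMarkovKernel.isProbabilityMeasure x
          exact toReal_prob_le_one _ _
        · haveI : IsProbabilityMeasure ((P (νseq n)) x) := IsMarkovKernel.isProbabilityMeasure x
          exact toReal_prob_le_one _ _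
      have hdown : ∫ x, (((P (νseq n)) x) A).toReal ∂(νseq n)
          - ∫ x, (((P (μseq n)) x) A).toReal ∂(μseq n)
          ≤ lam * (d / 2) + (1 - α) * (d / 2) := by
        refine core hmg hmf (fun x => ENNReal.toReal_nonneg)
          (fun x => ?_) (fun x => ENNReal.toReal_nonneg) (fun x => ?_) hα'
          (fun x => by have := hLxy x; rw [abs_le] at this; linarith)
          hDμ ht'
        · haveI : IsProbabilityMeasure ((P (νseq n)) x) := IsMarkovKernel.isProbabilityMeasure x
          exact toReal_prob_le_one _ _
        · haveI : IsProbabilityMeasure ((P (μseq n)) x) := IsMarkovKernel.isProbabilityMeasure x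
          exact toReal_prob_le_one _ _
      rw [abs_le]
      constructor <;> [linarith; linarith]
    refine hbound.trans ?_
    have hd2 : d / 2 ≤ (1 - α + lam) ^ n := by linarith [ih]
    have hpow : (0 : ℝ) ≤ (1 - α + lam) ^ n := pow_nonneg hr0 n
    have : (lam + (1 - α)) * (d / 2) ≤ (1 - α + lam) * (1 - α + lam) ^ n := by
      nlinarith
    calc 2 * ((lam + (1 - α)) * (d / 2)) ≤ 2 * ((1 - α + lam) * (1 - α + lam) ^ n) := by
          linarith
      _ = 2 * (1 - α + lam) ^ (n + 1) := by ring
end
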